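/- Universal approximation of IFNOs (the paper's main Theorem, made precise on compact input sets): Let M ≥ 1, let K ⊆ ℝ^M be a nonempty compact set of input (loading) vectors, let U* : K → ℝ^M be a solution map, let U⁰ ∈ ℝ^M be a fixed initial guess, and let R : ℝ^M × ℝ^M → ℝ^M be continuous and satisfy (i) R(U*(F), F) = 0 for all F ∈ K, (ii) there exists m > 0 with ‖R(U, F) − R(V, F)‖ ≤ m‖U − V‖ for all U, V ∈ ℝ^M and all F ∈ K, and (iii) the fixed-point iteration U^{l+1}(F) = U^l(F) + R(U^l(F), F) with U^0(F) = U⁰ converges uniformly on K: for every ε > 0 there is an integer L₀ such that ‖U^l(F) − U*(F)‖ ≤ ε for all l ≥ L₀ and all F ∈ K. Then for every ε > 0 there exist a depth L ∈ ℕ, a feature dimension d ∈ ℕ, and IFNO parameters P ∈ ℝ^{dM×2M}, p ∈ ℝ^{dM}, V ∈ ℝ^{d×d}, C ∈ ℝ^{dM}, Q₁ ∈ ℝ^{dM×dM}, Q₂ ∈ ℝ^{M×dM}, q₁ ∈ ℝ^{dM}, q₂ ∈ ℝ^M such that ‖𝒬(ℒ^L(𝒫([U⁰; F]))) − U*(F)‖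 ≤ ε for every F ∈ K, where [U⁰; F] ∈ ℝ^{2M} denotes the concatenation of U⁰ and F. -/

import Mathlib

open Matrix

/-- Entrywise ReLU applied to a vector. -/
noncomputable def vecReLU {ι : Type*} (z : ι → ℝ) : ι → ℝ := fun i => max (z i) 0

/-- The IFNO iterative layer `ℒ(H) = H + σ(Ṽ H + C)` with `Ṽ = 𝟙_{M×M} ⊗ V`
the Kronecker product of the `M×M` all-ones matrix with `V`.  Feature vectors in
`ℝ^{dM}` are indexed by `Fin M × Fin d`. -/
noncomputable def ifnoLayer (M d : ℕ) (V : Matrix (Fin d) (Fin d) ℝ)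
    (C : Fin M × Fin d → ℝ) (H : Fin M × Fin d → ℝ) : Fin M × Fin d → ℝ :=
  H + vecReLU
    ((Matrix.kroneckerMap (· * ·) (Matrix.of fun _ _ : Fin M => (1 : ℝ)) V).mulVec H + C)

/-- The IFNO of depth `L`: lifting layer `𝒫(z) = P z + p`, followed by `L` iterative
layers, followed by the projection layer `𝒬(H) = Q₂(Q₁ H + q₁) + q₂` with identity
activation.  Inputs in `ℝ^{2M}` are indexed by `Fin M ⊕ Fin M`. -/
noncomputable def ifno (M d L : ℕ)
    (P : Matrix (Fin M × Fin d) (Fin M ⊕ Fin M) ℝ) (p : Fin M × Fin d → ℝ)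
    (V : Matrix (Fin d) (Fin d) ℝ) (C : Fin M × Fin d → ℝ)
    (Q1 : Matrix (Fin M × Fin d) (Fin M × Fin d) ℝ) (q1 : Fin M × Fin d → ℝ)
    (Q2 : Matrix (Fin M) (Fin M × Fin d) ℝ) (q2 : Fin M → ℝ)
    (z : Fin M ⊕ Fin M → ℝ) : Fin M → ℝ :=
  Q2.mulVec (Q1.mulVec ((ifnoLayer M d V C)^[L] (P.mulVec z + p)) + q1) + q2

noncomputable def hatFn (δ s : ℝ) : ℝ := max (1 - |s|/δ) 0

lemma hatFn_nonneg (δ s : ℝ) : 0 ≤ hatFn δ s := le_max_right _ _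

lemma hatFn_eq_zero {δ s : ℝ} (hδ : 0 < δ) (h : δ ≤ |s|) : hatFn δ s = 0 := by
  have : 1 - |s|/δ ≤ 0 := by
    rw [sub_nonpos, le_div_iff₀ hδ]; linarith
  simp [hatFn, max_eq_right this]

lemma hatFn_as_relu (δ s : ℝ) (hδ : 0 < δ) :
    hatFn δ s = (max (s+δ) 0 - 2*max s 0 + max (s-δ) 0)/δ := by
  unfold hatFn
  rcases le_total s 0 with h0 | h0
  · rw [abs_of_nonpos h0, max_eq_right h0, max_eq_right (by linarith : s - δ ≤ 0)]
    rcases le_total (s+δ) 0 with h1 | h1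
    · rw [max_eq_right h1, max_eq_right (by rw [sub_nonpos, le_div_iff₀ hδ]; linarith)]
      ring
    · rw [max_eq_left h1, max_eq_left (by rw [sub_nonneg, div_le_iff₀ hδ]; linarith)]
      field_simp
      ring
  · rw [abs_of_nonneg h0, max_eq_left h0, max_eq_left (by linarith : 0 ≤ s + δ)]
    rcases le_total (s-δ) 0 with h1 | h1
    · rw [max_eq_right h1, max_eq_left (by rw [sub_nonneg, div_le_iff₀ hδ]; linarith)]
      field_simp; ring
    · rw [max_eq_left h1, max_eq_right (by rw [sub_nonpos, le_div_iff₀ hδ]; linarith)]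
      field_simp
      ring

lemma sum_hatFn (δ : ℝ) (hδ : 0 < δ) (a : ℝ) :
    ∀ (n : ℕ) (x : ℝ), a ≤ x → x ≤ a + n * δ →
      ∑ i ∈ Finset.range (n+1), hatFn δ (x - (a + i * δ)) = 1 := by
  intro n
  induction n with
  | zero =>
      intro x h1 h2
      have hx : x = a := le_antisymm (by simpa using h2) h1
      simp [hx, hatFn, hδ.le, max_eq_left]
  | succ n ih =>
      intro x h1 h2
      push_cast at h2
      rcases le_or_gt x (a + n * δ) with h3 | h3
      · rw [Finset.sum_range_succ, ih x h1 h3, hatFn_eq_zero hδ]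
        · ring
        · rw [abs_of_nonpos (by push_cast; nlinarith)]
          push_cast; nlinarith
      · rw [Finset.sum_range_succ, Finset.sum_range_succ]
        have hz : ∑ i ∈ Finset.range n, hatFn δ (x - (a + i * δ)) = 0 := by
          apply Finset.sum_eq_zero
          intro i hi
          have hi' : (i : ℝ) + 1 ≤ n := by
            have := Finset.mem_range.mp hi
            exact_mod_cast this
          apply hatFn_eq_zero hδ
          rw [abs_of_nonneg (by nlinarith)]
          nlinarith
        rw [hz]
        unfold hatFn
        push_cast
        rw [abs_of_nonneg (by nlinarith : (0:ℝ) ≤ x - (a + n*δ)),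
            abs_of_nonpos (by nlinarith : x - (a + ((n:ℝ)+1) * δ) ≤ 0)]
        rw [max_eq_left (by rw [sub_nonneg, div_le_iff₀ hδ]; nlinarith),
            max_eq_left (by rw [sub_nonneg, div_le_iff₀ hδ]; nlinarith)]
        field_simp
        ring

/-- 1-D approximation of a continuous function on a compact interval by a sum of ReLU units. -/
lemma relu_approx_1d (φ : ℝ → ℝ) (hφ : Continuous φ) (a b ε : ℝ) (hab : a ≤ b) (hε : 0 < ε) :
    ∃ (ι : Type) (_ : Fintype ι) (d t : ι → ℝ),
      ∀ x ∈ Set.Icc a b, |φ x - ∑ i, d i * max (x - t i) 0| ≤ ε := by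
  have hUC : UniformContinuousOn φ (Set.Icc a (b+1)) :=
    (isCompact_Icc).uniformContinuousOn_of_continuous hφ.continuousOn
  rw [Metric.uniformContinuousOn_iff] at hUC
  obtain ⟨δ0, hδ0, hδ0'⟩ := hUC ε hε
  set δ : ℝ := min δ0 1 with hδdef
  have hδ : 0 < δ := lt_min hδ0 one_pos
  have hδ1 : δ ≤ 1 := min_le_right _ _
  have hδ2 : δ ≤ δ0 := min_le_left _ _
  set n : ℕ := ⌈(b - a)/δ⌉₊ with hn
  have hbn : b ≤ a + n * δ := by
    have := Nat.le_ceil ((b-a)/δ)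
    rw [div_le_iff₀ hδ] at this
    linarith
  have hgrid : ∀ i : ℕ, i ≤ n → a + i * δ ∈ Set.Icc a (b+1) := by
    intro i hi
    have hi0 : (0:ℝ) ≤ i := by positivity
    constructor
    · nlinarith [hδ.le]
    · have h1 : (n : ℝ) < (b-a)/δ + 1 := by
        have h0 : (0:ℝ) ≤ (b-a)/δ := div_nonneg (by linarith) hδ.le
        exact_mod_cast Nat.ceil_lt_add_one h0
      have hin : (i:ℝ) ≤ n := by exact_mod_cast hi
      have h2 : (n:ℝ) * δ < (b - a) + δ := by
        have h3 := mul_lt_mul_of_pos_right h1 hδ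
        rwa [add_mul, div_mul_cancel₀ _ hδ.ne', one_mul] at h3
      nlinarith
  refine ⟨Fin (n+1) × Fin 3, inferInstance,
    (fun ij => ![φ (a + ij.1 * δ)/δ, -2*φ (a + ij.1 * δ)/δ, φ (a + ij.1 * δ)/δ] ij.2),
    (fun ij => ![a + ij.1 * δ - δ, a + ij.1 * δ, a + ij.1 * δ + δ] ij.2), ?_⟩
  intro x hx
  have hsum : ∑ ij : Fin (n+1) × Fin 3,
      (![φ (a + ij.1 * δ)/δ, -2*φ (a + ij.1 * δ)/δ, φ (a + ij.1 * δ)/δ] ij.2)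
        * max (x - ![a + ij.1 * δ - δ, a + ij.1 * δ, a + ij.1 * δ + δ] ij.2) 0
      = ∑ i : Fin (n+1), φ (a + i * δ) * hatFn δ (x - (a + i * δ)) := by
    rw [Fintype.sum_prod_type]
    apply Finset.sum_congr rfl
    intro i _
    rw [Fin.sum_univ_three]
    simp only [Matrix.cons_val_zero, Matrix.cons_val_one, Matrix.head_cons,
      Matrix.cons_val_two, Matrix.tail_cons]
    rw [hatFn_as_relu _ _ hδ]
    have e1 : x - (a + (i:ℝ) * δ - δ) = x - (a + (i:ℝ)*δ) + δ := by ring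
    have e2 : x - (a + (i:ℝ) * δ + δ) = x - (a + (i:ℝ)*δ) - δ := by ring
    rw [e1, e2]
    field_simp
    ring
  rw [hsum]
  have hone : ∑ i : Fin (n+1), hatFn δ (x - (a + i * δ)) = 1 := by
    rw [Fin.sum_univ_eq_sum_range (fun i => hatFn δ (x - (a + i * δ)))]
    exact sum_hatFn δ hδ a n x hx.1 (le_trans hx.2 hbn)
  have hsplit : φ x - ∑ i : Fin (n+1), φ (a + i * δ) * hatFn δ (x - (a + i * δ))
      = ∑ i : Fin (n+1), (φ x - φ (a + i * δ)) * hatFn δ (x - (a + i * δ)) := by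
    simp only [sub_mul]
    rw [Finset.sum_sub_distrib, ← Finset.mul_sum, hone, mul_one]
  rw [hsplit]
  have key : ∀ i : Fin (n+1), |φ x - φ (a + i * δ)| * hatFn δ (x - (a + i*δ))
      ≤ ε * hatFn δ (x - (a + i*δ)) := by
    intro i
    rcases le_or_gt δ (|x - (a + i*δ)|) with h | h
    · rw [hatFn_eq_zero hδ h]; simp
    · apply mul_le_mul_of_nonneg_right _ (hatFn_nonneg _ _)
      have hxmem : x ∈ Set.Icc a (b+1) := ⟨hx.1, by linarith [hx.2]⟩
      have htmem := hgrid i.val (Nat.lt_succ_iff.mp i.isLt)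
      have hd := hδ0' x hxmem _ htmem (by rw [Real.dist_eq]; exact lt_of_lt_of_le h hδ2)
      rw [Real.dist_eq] at hd
      exact hd.le
  calc |∑ i : Fin (n+1), (φ x - φ (a + i * δ)) * hatFn δ (x - (a + i * δ))|
      ≤ ∑ i : Fin (n+1), |(φ x - φ (a + i * δ)) * hatFn δ (x - (a + i * δ))| :=
        Finset.abs_sum_le_sum_abs _ _
    _ = ∑ i : Fin (n+1), |φ x - φ (a + i * δ)| * hatFn δ (x - (a + i * δ)) := by
        apply Finset.sum_congr rfl
        intro i _
        rw [abs_mul, abs_of_nonneg (hatFn_nonneg _ _)]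
    _ ≤ ∑ i : Fin (n+1), ε * hatFn δ (x - (a + i * δ)) := Finset.sum_le_sum (fun i _ => key i)
    _ = ε := by rw [← Finset.mul_sum, hone, mul_one]
section Dense

variable {M : ℕ} (K : Set (EuclideanSpace ℝ (Fin M)))

/-- ReLU ridge units on `K`. -/
def reluSet : Set C(K, ℝ) :=
  {g | ∃ (w : Fin M → ℝ) (c : ℝ), ∀ x : K,
    g x = max ((∑ j, w j * (x : EuclideanSpace ℝ (Fin M)) j) + c) 0}

/-- cosine ridge units on `K`. -/
def cosSet : Set C(K, ℝ) :=
  {g | ∃ (w : Fin M → ℝ) (c : ℝ), ∀ x : K,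
    g x = Real.cos ((∑ j, w j * (x : EuclideanSpace ℝ (Fin M)) j) + c)}

lemma ridge_continuous (w : Fin M → ℝ) (c : ℝ) :
    Continuous fun x : K => (∑ j, w j * (x : EuclideanSpace ℝ (Fin M)) j) + c := by
  apply Continuous.add _ continuous_const
  apply continuous_finset_sum
  intro j _
  exact continuous_const.mul ((continuous_apply j).comp ((PiLp.continuous_ofLp 2 _).comp continuous_subtype_val))

/-- Every cosine ridge unit lies in the closure of the span of the ReLU units. -/
lemma cos_mem_closure [CompactSpace K] (w : Fin M → ℝ) (c : ℝ) :
    (⟨_, Real.continuous_cos.comp (ridge_continuous K w c)⟩ : C(K, ℝ)) ∈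
      closure (Submodule.span ℝ (reluSet K) : Set C(K, ℝ)) := by
  rw [Metric.mem_closure_iff]
  intro ε hε
  set T : C(K, ℝ) := ⟨_, ridge_continuous K w c⟩ with hT
  set B : ℝ := ‖T‖ with hB
  have hBx : ∀ x : K, T x ∈ Set.Icc (-B) B := by
    intro x
    have := T.norm_coe_le_norm x
    rw [Real.norm_eq_abs, abs_le] at this
    exact this
  obtain ⟨ι, hι, d, t, hdt⟩ := relu_approx_1d Real.cos Real.continuous_cos (-B) B (ε/2)
    (neg_le_self (norm_nonneg T)) (by positivity)
  set g : C(K, ℝ) := ∑ i : ι, d i • (⟨_, (ridge_continuous K w (c - t i)).max continuous_const⟩ :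
    C(K, ℝ)) with hg
  refine ⟨g, ?_, ?_⟩
  · apply Submodule.sum_mem
    intro i _
    apply Submodule.smul_mem
    apply Submodule.subset_span
    exact ⟨w, c - t i, fun x => rfl⟩
  · have hgx : ∀ x : K, g x = ∑ i : ι, d i * max (T x - t i) 0 := by
      intro x
      rw [hg]
      simp only [ContinuousMap.coe_sum, Finset.sum_apply, ContinuousMap.coe_smul, Pi.smul_apply,
        smul_eq_mul]
      apply Finset.sum_congr rfl
      intro i _
      congr 1
      show max ((∑ j, w j * (x : EuclideanSpace ℝ (Fin M)) j) + (c - t i)) 0 = _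
      have : (∑ j, w j * (x : EuclideanSpace ℝ (Fin M)) j) + (c - t i) = T x - t i := by
        rw [hT]; show _ = ((∑ j, w j * (x : EuclideanSpace ℝ (Fin M)) j) + c) - t i; ring
      rw [this]
    have : dist (⟨_, Real.continuous_cos.comp (ridge_continuous K w c)⟩ : C(K, ℝ)) g ≤ ε/2 := by
      apply ContinuousMap.dist_le (by positivity) |>.mpr
      intro x
      rw [Real.dist_eq, hgx x]
      exact hdt (T x) (hBx x)
    linarith

lemma cos_mul_cos' (p q : ℝ) :
    Real.cos p * Real.cos q = (Real.cos (p+q) + Real.cos (p-q))/2 := by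
  rw [Real.cos_add, Real.cos_sub]; ring

/-- The span of the cosine units is closed under multiplication. -/
lemma cosSpan_mul_mem (f g : C(K, ℝ)) (hf : f ∈ Submodule.span ℝ (cosSet K))
    (hg : g ∈ Submodule.span ℝ (cosSet K)) : f * g ∈ Submodule.span ℝ (cosSet K) := by
  have base : ∀ u ∈ cosSet K, ∀ v ∈ cosSet K, u * v ∈ Submodule.span ℝ (cosSet K) := by
    rintro u ⟨w, c, hu⟩ v ⟨w', c', hv⟩
    have key : u * v = (1/2 : ℝ) •
        (⟨_, Real.continuous_cos.comp (ridge_continuous K (w + w') (c + c'))⟩ : C(K, ℝ))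
      + (1/2 : ℝ) •
        (⟨_, Real.continuous_cos.comp (ridge_continuous K (w - w') (c - c'))⟩ : C(K, ℝ)) := by
      ext x
      simp only [ContinuousMap.mul_apply, ContinuousMap.add_apply, ContinuousMap.smul_apply,
        ContinuousMap.coe_mk, smul_eq_mul, Function.comp_apply]
      rw [hu x, hv x]
      set s := ∑ j, w j * (x : EuclideanSpace ℝ (Fin M)) j with hs
      set s' := ∑ j, w' j * (x : EuclideanSpace ℝ (Fin M)) j with hs'
      have e1 : ∑ j, (w + w') j * (x : EuclideanSpace ℝ (Fin M)) j = s + s' := by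
        rw [hs, hs', ← Finset.sum_add_distrib]
        apply Finset.sum_congr rfl
        intro j _
        simp [add_mul]
      have e2 : ∑ j, (w - w') j * (x : EuclideanSpace ℝ (Fin M)) j = s - s' := by
        rw [hs, hs', ← Finset.sum_sub_distrib]
        apply Finset.sum_congr rfl
        intro j _
        simp [sub_mul]
      rw [e1, e2]
      have a1 : s + s' + (c + c') = (s + c) + (s' + c') := by ring
      have a2 : s - s' + (c - c') = (s + c) - (s' + c') := by ring
      rw [a1, a2, cos_mul_cos']
      ring
    rw [key]
    apply Submodule.add_mem
    · exact Submodule.smul_mem _ _ (Submodule.subset_span ⟨w + w', c + c', fun x => rfl⟩)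
    · exact Submodule.smul_mem _ _ (Submodule.subset_span ⟨w - w', c - c', fun x => rfl⟩)
  induction hf using Submodule.span_induction with
  | mem u hu =>
      induction hg using Submodule.span_induction with
      | mem v hv => exact base u hu v hv
      | zero => simpa using Submodule.zero_mem _
      | add v v' _ _ h1 h2 => rw [mul_add]; exact Submodule.add_mem _ h1 h2
      | smul r v _ h1 => rw [mul_smul_comm]; exact Submodule.smul_mem _ _ h1
  | zero => simpa using Submodule.zero_mem _
  | add u u' _ _ h1 h2 => rw [add_mul]; exact Submodule.add_mem _ h1 h2
  | smul r u _ h1 => rw [smul_mul_assoc]; exact Submodule.smul_mem _ _ h1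

lemma one_mem_cosSpan : (1 : C(K, ℝ)) ∈ Submodule.span ℝ (cosSet K) := by
  apply Submodule.subset_span
  refine ⟨0, 0, fun x => ?_⟩
  simp

/-- The cosine span as a subalgebra. -/
noncomputable def cosAlg : Subalgebra ℝ C(K, ℝ) :=
  (Submodule.span ℝ (cosSet K)).toSubalgebra (one_mem_cosSpan K) (cosSpan_mul_mem K)

lemma cosAlg_separates : (cosAlg K).SeparatesPoints := by
  intro x y hxy
  have hxy' : (x : EuclideanSpace ℝ (Fin M)) ≠ (y : EuclideanSpace ℝ (Fin M)) :=
    fun h => hxy (Subtype.ext h)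
  obtain ⟨j0, hj0⟩ : ∃ j, (x : EuclideanSpace ℝ (Fin M)) j ≠ (y : EuclideanSpace ℝ (Fin M)) j := by
    by_contra h
    push_neg at h
    exact hxy' (WithLp.ofLp_injective 2 (funext h))
  set xv := (x : EuclideanSpace ℝ (Fin M)) j0
  set yv := (y : EuclideanSpace ℝ (Fin M)) j0
  have hd : xv - yv ≠ 0 := sub_ne_zero.mpr hj0
  set w : Fin M → ℝ := fun j => if j = j0 then Real.pi / (xv - yv) else 0 with hw
  set c : ℝ := -(Real.pi / (xv - yv)) * xv with hc
  have hsum : ∀ z : K, ∑ j, w j * (z : EuclideanSpace ℝ (Fin M)) j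
      = Real.pi / (xv - yv) * (z : EuclideanSpace ℝ (Fin M)) j0 := by
    intro z
    rw [hw]
    rw [Finset.sum_eq_single j0]
    · simp
    · intro j _ hj; simp [hj]
    · intro h; simp at h
  refine ⟨_, ⟨(⟨fun z : K => Real.cos ((∑ j, w j * (z : EuclideanSpace ℝ (Fin M)) j) + c),
    Real.continuous_cos.comp (ridge_continuous K w c)⟩ : C(K, ℝ)),
    Submodule.subset_span ⟨w, c, fun z => rfl⟩, rfl⟩, ?_⟩
  show Real.cos ((∑ j, w j * (x : EuclideanSpace ℝ (Fin M)) j) + c)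
    ≠ Real.cos ((∑ j, w j * (y : EuclideanSpace ℝ (Fin M)) j) + c)
  rw [hsum x, hsum y, hc]
  have ex : Real.pi / (xv - yv) * xv + -(Real.pi / (xv - yv)) * xv = 0 := by ring
  have ey : Real.pi / (xv - yv) * yv + -(Real.pi / (xv - yv)) * xv = -Real.pi := by
    field_simp
    ring
  rw [ex, ey, Real.cos_zero, Real.cos_neg, Real.cos_pi]
  norm_num

/-- Density of ReLU-sum functions: extraction form. -/
lemma relu_dense_extract [CompactSpace K] [Nonempty K] (f : C(K, ℝ)) (ε : ℝ) (hε : 0 < ε) :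
    ∃ (ι : Type) (_ : Fintype ι) (d : ι → ℝ) (w : ι → Fin M → ℝ) (c : ι → ℝ),
      ∀ x : K, |f x - ∑ i, d i * max ((∑ j, w i j * (x : EuclideanSpace ℝ (Fin M)) j) + c i) 0|
        ≤ ε := by
  have htop := ContinuousMap.subalgebra_topologicalClosure_eq_top_of_separatesPoints
    (cosAlg K) (cosAlg_separates K)
  have hfA : f ∈ closure (cosAlg K : Set C(K, ℝ)) := by
    have h1 : f ∈ (cosAlg K).topologicalClosure := htop ▸ Algebra.mem_top
    exact h1
  have hsub : (cosAlg K : Set C(K, ℝ)) ⊆ closure (Submodule.span ℝ (reluSet K) : Set C(K, ℝ)) := by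
    intro g hg
    have hg' : g ∈ Submodule.span ℝ (cosSet K) := hg
    have hgen : cosSet K ⊆ (Submodule.span ℝ (reluSet K)).topologicalClosure := by
      rintro u ⟨w, c, hu⟩
      have : u = (⟨_, Real.continuous_cos.comp (ridge_continuous K w c)⟩ : C(K, ℝ)) := by
        ext x; rw [hu x]; rfl
      rw [this]
      exact cos_mem_closure K w c
    have := Submodule.span_le.mpr hgen
    exact this hg'
  have hf2 : f ∈ closure (Submodule.span ℝ (reluSet K) : Set C(K, ℝ)) :=
    closure_minimal hsub isClosed_closure hfA
  rw [Metric.mem_closure_iff] at hf2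
  obtain ⟨g, hgmem, hgdist⟩ := hf2 ε hε
  have hgmem' : g ∈ Submodule.span ℝ (reluSet K) := hgmem
  rw [Submodule.mem_span_set] at hgmem'
  obtain ⟨coef, hsupp, hsum⟩ := hgmem'
  have hmem : ∀ i : coef.support, ∃ (w : Fin M → ℝ) (c : ℝ), ∀ x : K,
      (i : C(K, ℝ)) x = max ((∑ j, w j * (x : EuclideanSpace ℝ (Fin M)) j) + c) 0 :=
    fun i => hsupp i.2
  choose ww cc hwc using hmem
  refine ⟨coef.support, inferInstance, fun i => coef (i : C(K, ℝ)), ww, cc, ?_⟩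
  intro x
  have hgx : g x = ∑ u ∈ coef.support, coef u * u x := by
    rw [← hsum, Finsupp.sum]
    rw [ContinuousMap.coe_sum, Finset.sum_apply]
    simp
  have hrepr : ∑ i : coef.support, coef (i : C(K, ℝ)) *
      max ((∑ j, ww i j * (x : EuclideanSpace ℝ (Fin M)) j) + cc i) 0 = g x := by
    rw [hgx, Finset.univ_eq_attach,
      ← Finset.sum_attach coef.support (fun u => coef u * u x)]
    exact Finset.sum_congr rfl (fun i _ => by rw [hwc i x])
  rw [hrepr, ← Real.dist_eq]
  exact le_trans (ContinuousMap.dist_apply_le_dist x) hgdist.le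
end Dense

section Realize

/-- A depth-one IFNO can represent any shallow ReLU network exactly. -/
lemma ifno_realize (M : ℕ) (i0 : Fin M) (ι : Type) [Fintype ι]
    (cc : Fin M → ι → ℝ) (w : ι → Fin M → ℝ) (bb : ι → ℝ) (e : Fin M → ℝ) :
    ∃ (d : ℕ) (P : Matrix (Fin M × Fin d) (Fin M ⊕ Fin M) ℝ) (p : Fin M × Fin d → ℝ)
      (V : Matrix (Fin d) (Fin d) ℝ) (C : Fin M × Fin d → ℝ)
      (Q1 : Matrix (Fin M × Fin d) (Fin M × Fin d) ℝ) (q1 : Fin M × Fin d → ℝ)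
      (Q2 : Matrix (Fin M) (Fin M × Fin d) ℝ) (q2 : Fin M → ℝ),
      ∀ (z : Fin M ⊕ Fin M → ℝ) (r : Fin M),
        ifno M d 1 P p V C Q1 q1 Q2 q2 z r
          = ∑ i : ι, cc r i * max ((∑ j, w i j * z (Sum.inr j)) + bb i) 0 + e r := by
  classical
  set n := Fintype.card ι with hn
  set E : ι ⊕ ι ≃ Fin (n + n) :=
    (Equiv.sumCongr (Fintype.equivFin ι) (Fintype.equivFin ι)).trans finSumFinEquiv with hE
  set S : (Fin M ⊕ Fin M → ℝ) → ι → ℝ := fun z l => ∑ j, w l j * z (Sum.inr j) with hS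
  set P : Matrix (Fin M × Fin (n+n)) (Fin M ⊕ Fin M) ℝ := Matrix.of (fun ik s => Sum.elim
      (fun l => if ik.1 = i0 then Sum.elim (fun _ => (0:ℝ)) (w l) s else 0)
      (fun _ => 0) (E.symm ik.2)) with hP
  set V : Matrix (Fin (n+n)) (Fin (n+n)) ℝ := Matrix.of (fun k l => Sum.elim (fun _ => (0:ℝ))
      (fun a => Sum.elim (fun a' => if a = a' then (1:ℝ) else 0) (fun _ => 0) (E.symm l))
      (E.symm k)) with hV
  set C : Fin M × Fin (n+n) → ℝ :=
    (fun ik => Sum.elim (fun _ => (0:ℝ)) bb (E.symm ik.2)) with hC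
  set Q2 : Matrix (Fin M) (Fin M × Fin (n+n)) ℝ := Matrix.of (fun r ik => Sum.elim
      (fun _ => (0:ℝ)) (fun a => if ik.1 = i0 then cc r a else 0) (E.symm ik.2)) with hQ2
  refine ⟨n + n, P, 0, V, C, 1, 0, Q2, e, ?_⟩
  intro z r
  set H0 : Fin M × Fin (n+n) → ℝ := P.mulVec z + 0 with hH0
  have hH0' : ∀ ik : Fin M × Fin (n+n),
      H0 ik = Sum.elim (fun l => if ik.1 = i0 then S z l else 0) (fun _ => 0) (E.symm ik.2) := by
    intro ik
    rw [hH0]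
    simp only [Pi.add_apply, Pi.zero_apply, add_zero, Matrix.mulVec, dotProduct, hP,
      Matrix.of_apply]
    rcases h : E.symm ik.2 with l | a
    · simp only [Sum.elim_inl]
      split_ifs with hi
      · rw [Fintype.sum_sum_type]
        simp [hS]
      · simp
    · simp
  set H1 : Fin M × Fin (n+n) → ℝ := ifnoLayer M (n+n) V C H0 with hH1
  have hTl : ∀ l : Fin (n+n), ∑ j : Fin M, H0 (j, l)
      = Sum.elim (fun l' => S z l') (fun _ => (0:ℝ)) (E.symm l) := by
    intro l
    rcases h : E.symm l with l' | a
    · simp only [Sum.elim_inl]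
      have : ∀ j : Fin M, H0 (j, l) = if j = i0 then S z l' else 0 := by
        intro j
        rw [hH0' (j, l)]
        simp [h]
      simp only [this]
      simp [Finset.sum_ite_eq']
    · have : ∀ j : Fin M, H0 (j, l) = 0 := by
        intro j
        rw [hH0' (j, l)]
        simp [h]
      simp [this]
  have hkron : ∀ ik : Fin M × Fin (n+n),
      ((Matrix.kroneckerMap (· * ·) (Matrix.of fun _ _ : Fin M => (1 : ℝ)) V).mulVec H0) ik
        = Sum.elim (fun _ => (0:ℝ)) (fun a => S z a) (E.symm ik.2) := by
    rintro ⟨i, k⟩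
    simp only [Matrix.mulVec, dotProduct]
    calc ∑ jl : Fin M × Fin (n+n),
        Matrix.kroneckerMap (· * ·) (Matrix.of fun _ _ : Fin M => (1 : ℝ)) V (i, k) jl * H0 jl
        = ∑ j : Fin M, ∑ l : Fin (n+n),
            Matrix.kroneckerMap (· * ·) (Matrix.of fun _ _ : Fin M => (1 : ℝ)) V (i, k) (j, l)
              * H0 (j, l) := Fintype.sum_prod_type _
      _ = ∑ l : Fin (n+n), ∑ j : Fin M,
            Matrix.kroneckerMap (· * ·) (Matrix.of fun _ _ : Fin M => (1 : ℝ)) V (i, k) (j, l)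
              * H0 (j, l) := Finset.sum_comm
      _ = ∑ l : Fin (n+n), V k l * Sum.elim (fun l' => S z l') (fun _ => (0:ℝ)) (E.symm l) := by
          refine Finset.sum_congr rfl fun l _ => ?_
          rw [← hTl l, Finset.mul_sum]
          refine Finset.sum_congr rfl fun j _ => ?_
          simp [Matrix.kroneckerMap_apply]
      _ = ∑ s : ι ⊕ ι, V k (E s) * Sum.elim (fun l' => S z l') (fun _ => (0:ℝ)) (E.symm (E s)) :=
          (Equiv.sum_comp E (fun l => V k l * Sum.elim (fun l' => S z l') (fun _ => (0:ℝ))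
            (E.symm l))).symm
      _ = Sum.elim (fun _ => (0:ℝ)) (fun a => S z a) (E.symm k) := by
          rcases h : E.symm k with l' | a
          · simp only [Sum.elim_inl]
            apply Finset.sum_eq_zero
            intro s _
            simp [hV, h]
          · simp only [Sum.elim_inr]
            rw [Fintype.sum_sum_type]
            have h2 : ∀ a' : ι, V k (E (Sum.inr a'))
                * Sum.elim (fun l' => S z l') (fun _ => (0:ℝ)) (E.symm (E (Sum.inr a'))) = 0 := by
              intro a'
              simp [Equiv.symm_apply_apply]
            have h1 : ∀ a' : ι, V k (E (Sum.inl a'))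
                * Sum.elim (fun l' => S z l') (fun _ => (0:ℝ)) (E.symm (E (Sum.inl a')))
                = (if a = a' then (1:ℝ) else 0) * S z a' := by
              intro a'
              simp [hV, h, Equiv.symm_apply_apply]
            simp only [h1, h2, Finset.sum_const_zero, add_zero, ite_mul, one_mul, zero_mul]
            simp [Finset.sum_ite_eq]
  have hH1' : ∀ ik : Fin M × Fin (n+n), H1 ik
      = Sum.elim (fun l => if ik.1 = i0 then S z l else 0)
          (fun a => max (S z a + bb a) 0) (E.symm ik.2) := by
    intro ik
    rw [hH1]
    show H0 ik + max (((Matrix.kroneckerMap (· * ·)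
        (Matrix.of fun _ _ : Fin M => (1 : ℝ)) V).mulVec H0) ik + C ik) 0 = _
    rw [hkron ik, hH0' ik]
    rcases h : E.symm ik.2 with l | a
    · simp [hC, h]
    · simp [hC, h]
  show Q2.mulVec ((1 : Matrix (Fin M × Fin (n+n)) (Fin M × Fin (n+n)) ℝ).mulVec
      ((ifnoLayer M (n+n) V C)^[1] (P.mulVec z + 0)) + 0) r + e r = _
  rw [Function.iterate_one]
  have hid : (ifnoLayer M (n+n) V C) (P.mulVec z + 0) = H1 := rfl
  rw [hid, Matrix.one_mulVec, add_zero]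
  have hout : Q2.mulVec H1 r = ∑ a : ι, cc r a * max (S z a + bb a) 0 := by
    simp only [Matrix.mulVec, dotProduct]
    calc ∑ ik : Fin M × Fin (n+n), Q2 r ik * H1 ik
        = ∑ i : Fin M, ∑ k : Fin (n+n), Q2 r (i, k) * H1 (i, k) := Fintype.sum_prod_type _
      _ = ∑ i : Fin M, ∑ s : ι ⊕ ι, Q2 r (i, E s) * H1 (i, E s) :=
          Finset.sum_congr rfl fun i _ => (Equiv.sum_comp E (fun k => Q2 r (i, k) * H1 (i, k))).symm
      _ = ∑ i : Fin M, ∑ a : ι, (if i = i0 then cc r a else 0) * max (S z a + bb a) 0 := by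
          refine Finset.sum_congr rfl fun i _ => ?_
          rw [Fintype.sum_sum_type]
          have h1 : ∀ a : ι, Q2 r (i, E (Sum.inl a)) * H1 (i, E (Sum.inl a)) = 0 := by
            intro a
            have := hH1' (i, E (Sum.inl a))
            simp [hQ2, Equiv.symm_apply_apply]
          have h2 : ∀ a : ι, Q2 r (i, E (Sum.inr a)) * H1 (i, E (Sum.inr a))
              = (if i = i0 then cc r a else 0) * max (S z a + bb a) 0 := by
            intro a
            rw [hH1' (i, E (Sum.inr a))]
            simp [hQ2, Equiv.symm_apply_apply]
          simp only [h1, h2, Finset.sum_const_zero, zero_add]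
      _ = ∑ a : ι, cc r a * max (S z a + bb a) 0 := by
          rw [Finset.sum_comm]
          refine Finset.sum_congr rfl fun a _ => ?_
          simp [ite_mul, Finset.sum_ite_eq']
  rw [hout]

end Realize

lemma euclid_norm_le_of_forall (M : ℕ) (v : EuclideanSpace ℝ (Fin M)) (a : ℝ) (ha : 0 ≤ a)
    (h : ∀ i, |v i| ≤ a) : ‖v‖ ≤ M * a := by
  rw [EuclideanSpace.norm_eq]
  have h1 : ∑ i : Fin M, ‖v i‖^2 ≤ ∑ _i : Fin M, a^2 := by
    apply Finset.sum_le_sum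
    intro i _
    have := h i
    rw [Real.norm_eq_abs]
    nlinarith [abs_nonneg (v i)]
  rw [Finset.sum_const, Finset.card_univ, Fintype.card_fin, nsmul_eq_mul] at h1
  have hMM : (M:ℝ) ≤ (M:ℝ)^2 := by
    have : M ≤ M^2 := Nat.le_self_pow two_ne_zero M
    exact_mod_cast this
  have h2 : (M:ℝ) * a^2 ≤ (M*a)^2 := by nlinarith [sq_nonneg a]
  calc √(∑ i : Fin M, ‖v i‖^2) ≤ √((M*a)^2) := Real.sqrt_le_sqrt (le_trans h1 h2)
    _ = M * a := Real.sqrt_sq (by positivity)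

/-- Universal approximation of IFNOs: if a continuous update map `R` defines a
fixed-point iteration that vanishes at the solution map `Ustar`, is Lipschitz in its
first argument uniformly over the compact input set `K`, and converges uniformly on
`K`, then for every `ε > 0` there is an IFNO whose output approximates `Ustar` to
within `ε` on `K`, applied to the concatenation `[U⁰; F]` of the initial guess and
the input. -/
theorem ifno_universal_approximation
    (M : ℕ) (hM : 1 ≤ M)
    (K : Set (EuclideanSpace ℝ (Fin M))) (hKne : K.Nonempty) (hKc : IsCompact K)
    (Ustar : EuclideanSpace ℝ (Fin M) → EuclideanSpace ℝ (Fin M))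
    (U0 : EuclideanSpace ℝ (Fin M))
    (R : EuclideanSpace ℝ (Fin M) → EuclideanSpace ℝ (Fin M) → EuclideanSpace ℝ (Fin M))
    (hRcont : Continuous fun q : EuclideanSpace ℝ (Fin M) × EuclideanSpace ℝ (Fin M) =>
      R q.1 q.2)
    (hRzero : ∀ F ∈ K, R (Ustar F) F = 0)
    (m : ℝ) (hm : 0 < m)
    (hLip : ∀ (U V : EuclideanSpace ℝ (Fin M)), ∀ F ∈ K, ‖R U F - R V F‖ ≤ m * ‖U - V‖)
    (iter : ℕ → EuclideanSpace ℝ (Fin M) → EuclideanSpace ℝ (Fin M))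
    (hiter0 : ∀ F, iter 0 F = U0)
    (hiterS : ∀ l F, iter (l + 1) F = iter l F + R (iter l F) F)
    (hconv : ∀ ε > 0, ∃ L0 : ℕ, ∀ l ≥ L0, ∀ F ∈ K, ‖iter l F - Ustar F‖ ≤ ε) :
    ∀ ε > 0, ∃ (L d : ℕ)
      (P : Matrix (Fin M × Fin d) (Fin M ⊕ Fin M) ℝ) (p : Fin M × Fin d → ℝ)
      (V : Matrix (Fin d) (Fin d) ℝ) (C : Fin M × Fin d → ℝ)
      (Q1 : Matrix (Fin M × Fin d) (Fin M × Fin d) ℝ) (q1 : Fin M × Fin d → ℝ)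
      (Q2 : Matrix (Fin M) (Fin M × Fin d) ℝ) (q2 : Fin M → ℝ),
      ∀ F ∈ K,
        ‖(WithLp.equiv 2 (Fin M → ℝ)).symm
            (ifno M d L P p V C Q1 q1 Q2 q2 (Sum.elim (fun i => U0 i) (fun i => F i)))
          - Ustar F‖ ≤ ε := by
  intro ε hε
  haveI hCS : CompactSpace K := isCompact_iff_compactSpace.mp hKc
  haveI hNE : Nonempty K := hKne.to_subtype
  obtain ⟨L0, hL0⟩ := hconv (ε/2) (by positivity)
  have hcont : ∀ l, Continuous (iter l) := by
    intro l
    induction l with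
    | zero =>
        have h0 : iter 0 = fun _ => U0 := funext hiter0
        rw [h0]; exact continuous_const
    | succ l ih =>
        have h0 : iter (l+1) = fun F => iter l F + R (iter l F) F := funext (hiterS l)
        rw [h0]
        exact ih.add (hRcont.comp (ih.prodMk continuous_id))
  have hM0 : (0:ℝ) < M := by exact_mod_cast hM
  set ε' := ε / (2 * M) with hε'def
  have hε' : 0 < ε' := by positivity
  have hGr : ∀ r : Fin M, Continuous fun x : K => iter L0 (x : EuclideanSpace ℝ (Fin M)) r :=
    fun r => ((EuclideanSpace.proj r).continuous.comp (hcont L0)).comp continuous_subtype_val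
  have happrox := fun r : Fin M => relu_dense_extract K (⟨_, hGr r⟩ : C(K, ℝ)) ε' hε'
  choose ι ιF dd ww ccc happ using happrox
  letI : ∀ r, Fintype (ι r) := ιF
  set i0 : Fin M := ⟨0, hM⟩ with hi0
  obtain ⟨d, P, p, V, C, Q1, q1, Q2, q2, hnet⟩ := ifno_realize M i0 ((r : Fin M) × ι r)
    (fun r s => if s.1 = r then dd s.1 s.2 else 0)
    (fun s => ww s.1 s.2) (fun s => ccc s.1 s.2) 0
  refine ⟨1, d, P, p, V, C, Q1, q1, Q2, q2, ?_⟩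
  intro F hF
  set x : K := ⟨F, hF⟩ with hx
  set z : Fin M ⊕ Fin M → ℝ := Sum.elim (fun i => U0 i) (fun i => F i) with hz
  have hcoord : ∀ r : Fin M, ifno M d 1 P p V C Q1 q1 Q2 q2 z r
      = ∑ i : ι r, dd r i * max ((∑ j, ww r i j * F j) + ccc r i) 0 := by
    intro r
    rw [hnet z r]
    rw [← Finset.univ_sigma_univ, Finset.sum_sigma]
    simp only [Pi.zero_apply, add_zero]
    rw [Finset.sum_eq_single r]
    · apply Finset.sum_congr rfl
      intro i _
      simp [hz]
    · intro ρ _ hρ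
      apply Finset.sum_eq_zero
      intro i _
      simp [hρ]
    · intro h; simp at h
  have hbound : ∀ r : Fin M, |ifno M d 1 P p V C Q1 q1 Q2 q2 z r - iter L0 F r| ≤ ε' := by
    intro r
    rw [hcoord r]
    have h2 := happ r x
    rw [abs_sub_comm]
    simpa using h2
  calc ‖(WithLp.equiv 2 (Fin M → ℝ)).symm (ifno M d 1 P p V C Q1 q1 Q2 q2 z) - Ustar F‖
      = dist ((WithLp.equiv 2 (Fin M → ℝ)).symm (ifno M d 1 P p V C Q1 q1 Q2 q2 z)) (Ustar F) :=
        (dist_eq_norm _ _).symm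
    _ ≤ dist ((WithLp.equiv 2 (Fin M → ℝ)).symm (ifno M d 1 P p V C Q1 q1 Q2 q2 z)) (iter L0 F)
          + dist (iter L0 F) (Ustar F) := dist_triangle _ _ _
    _ ≤ M * ε' + ε/2 := by
        apply add_le_add
        · rw [dist_eq_norm]
          apply euclid_norm_le_of_forall M _ ε' hε'.le
          intro i
          rw [PiLp.sub_apply, WithLp.equiv_symm_apply, PiLp.toLp_apply]
          exact hbound i
        · rw [dist_eq_norm]
          exact hL0 L0 le_rfl F hF
    _ ≤ ε := by
        have hME : (M:ℝ) * (ε / (2 * M)) = ε / 2 := by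
          field_simp
        rw [hε'def, hME]
        linarith
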